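/- Fix k ∈ I_uf and set F = {k}. Let Θ ⊆ ℤ^I satisfy Θ + f_k ⊆ Θ, and let S = {s_g : g∈Θ} be a Θ-pointed family satisfying the factorization property with respect to k: x_k · frz_{F,g}(s_g) = frz_{F,g+f_k}(s_{g+f_k}) for all g ∈ Θ. Then for every g ∈ Θ and every d ∈ ℕ such that k ∉ supp s_{g+d·f_k}, one has s_{g+d·f_k} = x_k^d · frz_{F,g}(s_g). -/

import Mathlib

/-! Common setup. -/

noncomputable section

namespace CAFreeze

variable {I : Type*} [Fintype I] [DecidableEq I]

/-- The Laurent polynomial ring LP = ℤ[x_i^{±1} : i ∈ I], modeled as the group algebra of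
ℤ^I over ℤ. -/
abbrev LP (I : Type*) := AddMonoidAlgebra ℤ (I → ℤ)

/-- The monomial x^m for an exponent vector m ∈ ℤ^I. -/
def mono (m : I → ℤ) : LP I := AddMonoidAlgebra.single m 1

/-- The coefficient of the monomial x^m in z ∈ LP. -/
def coeff (z : LP I) (m : I → ℤ) : ℤ := z.coeff m

variable (Iuf : Finset I) (Bt : I → {i // i ∈ Iuf} → ℤ)

/-- The linear map p* : ℤ^{I_uf} → ℤ^I, p*(n) = B̃·n. -/
def pstar (n : {i // i ∈ Iuf} → ℤ) : I → ℤ := fun i => ∑ kk : {i // i ∈ Iuf}, Bt i kk * n kk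

/-- p*(n) for n ∈ ℕ^{I_uf}. -/
def pstarN (n : {i // i ∈ Iuf} → ℕ) : I → ℤ := pstar Iuf Bt fun kk => (n kk : ℤ)

/-- supp n = {k ∈ I_uf : n_k ≠ 0}, as a subset of I. -/
def suppn (n : {i // i ∈ Iuf} → ℕ) : Set I := {i | ∃ h : i ∈ Iuf, n ⟨i, h⟩ ≠ 0}

/-- LP_{⪯m}: the ℤ-submodule of LP spanned by the monomials x^{m+p*(n)}, n ∈ ℕ^{I_uf}. -/
def LPle (m : I → ℤ) : Submodule ℤ (LP I) :=
  Submodule.span ℤ {z : LP I | ∃ n : {i // i ∈ Iuf} → ℕ, z = mono (m + pstarN Iuf Bt n)}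

open Classical in
/-- The freezing operator frz_{F,m}: it keeps the monomials x^{m+p*(n)} with
supp n ∩ F = ∅ and kills the monomials x^{m+p*(n)} with supp n ∩ F ≠ ∅. -/
def frz (F : Finset I) (m : I → ℤ) (z : LP I) : LP I :=
  AddMonoidAlgebra.ofCoeff (Finsupp.filter
    (fun e => ∃ n : {i // i ∈ Iuf} → ℕ, e = m + pstarN Iuf Bt n ∧ suppn Iuf n ∩ (F : Set I) = ∅) z.coeff)

/-- z ∈ LP is pointed at g: z = Σ_{n ∈ ℕ^{I_uf}} c_n x^{g+p*(n)} with c_0 = 1. -/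
def Pointed (g : I → ℤ) (z : LP I) : Prop :=
  coeff z g = 1 ∧
    ∀ e ∈ z.coeff.support, ∃ n : {i // i ∈ Iuf} → ℕ, e = g + pstarN Iuf Bt n

/-- supp z = ∪_{c_n ≠ 0} supp n, for a g-pointed z = Σ_n c_n x^{g+p*(n)}. -/
def suppz (g : I → ℤ) (z : LP I) : Set I :=
  ⋃ n ∈ {n : {i // i ∈ Iuf} → ℕ | coeff z (g + pstarN Iuf Bt n) ≠ 0}, suppn Iuf n

/-- suppDim z ∈ ℕ^{I_uf}: the coordinatewise maximum of {n : c_n ≠ 0}, for a g-pointed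
z = Σ_n c_n x^{g+p*(n)}. -/
def suppDim (g : I → ℤ) (z : LP I) : {i // i ∈ Iuf} → ℕ :=
  fun kk => sSup {d : ℕ | ∃ n : {i // i ∈ Iuf} → ℕ, coeff z (g + pstarN Iuf Bt n) ≠ 0 ∧ n kk = d}

/-!
STATEMENT 15: Fix k ∈ I_uf and set F = {k}. Let Θ ⊆ ℤ^I satisfy Θ + f_k ⊆ Θ, and let
S = {s_g : g∈Θ} be a Θ-pointed family satisfying the factorization property with respect
to k: x_k · frz_{F,g}(s_g) = frz_{F,g+f_k}(s_{g+f_k}) for all g ∈ Θ. Then for every g ∈ Θ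
and every d ∈ ℕ such that k ∉ supp s_{g+d·f_k}, one has s_{g+d·f_k} = x_k^d · frz_{F,g}(s_g).
-/
lemma frz_eq_self {g : I → ℤ} {k : I} {z : LP I}
    (hz : Pointed Iuf Bt g z) (hk : k ∉ suppz Iuf Bt g z) :
    frz Iuf Bt {k} g z = z := by
  classical
  ext e
  rw [frz, AddMonoidAlgebra.coeff_ofCoeff, Finsupp.filter_apply]
  split_ifs with h
  · rfl
  · symm
    by_contra hne
    have he : e ∈ z.coeff.support := Finsupp.mem_support_iff.mpr hne
    obtain ⟨n, hn⟩ := hz.2 e he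
    have hc : coeff z (g + pstarN Iuf Bt n) ≠ 0 := by rw [← hn]; exact hne
    have hks : k ∉ suppn Iuf n := by
      intro hmem
      exact hk (Set.mem_biUnion (show n ∈ _ from hc) hmem)
    refine h ⟨n, hn, ?_⟩
    ext x
    simp only [Set.mem_inter_iff, Set.mem_empty_iff_false, iff_false, not_and]
    intro hx hx'
    simp only [Finset.coe_singleton, Set.mem_singleton_iff] at hx'
    exact hks (hx' ▸ hx)

theorem shift_product_factorization (hfull : Function.Injective (pstar Iuf Bt))
    (k : I) (hk : k ∈ Iuf)
    (Θ : Set (I → ℤ)) (hΘ : ∀ g ∈ Θ, g + Pi.single k (1 : ℤ) ∈ Θ)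
    (s : (I → ℤ) → LP I) (hs : ∀ g ∈ Θ, Pointed Iuf Bt g (s g))
    -- the factorization property with respect to k, for F = {k}
    (hfact : ∀ g ∈ Θ, mono (Pi.single k (1 : ℤ)) * frz Iuf Bt {k} g (s g) =
      frz Iuf Bt {k} (g + Pi.single k (1 : ℤ)) (s (g + Pi.single k (1 : ℤ)))) :
    ∀ g ∈ Θ, ∀ d : ℕ,
      k ∉ suppz Iuf Bt (g + d • Pi.single k (1 : ℤ)) (s (g + d • Pi.single k (1 : ℤ))) →
      s (g + d • Pi.single k (1 : ℤ)) =
        mono (Pi.single k (1 : ℤ)) ^ d * frz Iuf Bt {k} g (s g) := by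
  intro g hg d hd
  set f : I → ℤ := Pi.single k (1 : ℤ) with hf
  have hmem : ∀ d : ℕ, g + d • f ∈ Θ := by
    intro d
    induction d with
    | zero => simpa using hg
    | succ d ih =>
      rw [succ_nsmul, ← add_assoc]
      exact hΘ _ ih
  have hiter : ∀ d : ℕ, frz Iuf Bt {k} (g + d • f) (s (g + d • f)) =
      mono f ^ d * frz Iuf Bt {k} g (s g) := by
    intro d
    induction d with
    | zero => simp
    | succ d ih =>
      have h1 := hfact (g + d • f) (hmem d)
      rw [ih] at h1
      rw [succ_nsmul, ← add_assoc, ← h1, pow_succ', mul_assoc]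
  rw [← hiter d]
  exact (frz_eq_self Iuf Bt (hs _ (hmem d)) hd).symm

end CAFreeze
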